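/- Let r ≥ 1 be an integer and let G be a connected subcubic simple graph containing at least one vertex of degree 3. Then there is a locally bijective homomorphism from G to the complete graph K_4 if and only if there is a locally bijective homomorphism from the r-subdivision G^r to the r-subdivision K_4^r. -/

import Mathlib

/-- Representatives of internal vertices of the `k`-subdivision of `G`:
a dart `d` of `G` together with a position `i : Fin k`; the pair `(d, i)` is
identified with `(d.symm, k - 1 - i)`. -/
def SubdivRep {V : Type*} (G : SimpleGraph V) (k : ℕ) :
    G.Dart × Fin k → G.Dart × Fin k → Prop :=
  fun a b => b.1 = a.1.symm ∧ (b.2 : ℕ) = k - 1 - (a.2 : ℕ)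

/-- Internal vertices of the `k`-subdivision of `G`. -/
abbrev SubdivInternal {V : Type*} (G : SimpleGraph V) (k : ℕ) :=
  Quot (SubdivRep G k)

/-- Vertices of the `k`-subdivision of `G`: the branch vertices (`Sum.inl`)
are the original vertices of `G`, and `Sum.inr` are the internal vertices. -/
abbrev SubdivVertex {V : Type*} (G : SimpleGraph V) (k : ℕ) :=
  V ⊕ SubdivInternal G k

/-- One-directional adjacency for the `k`-subdivision: a branch vertex `u` is
adjacent to the first internal vertex of any edge of `G` leaving `u` (via the
identification, also to the last internal vertex of any edge entering `u`),
and consecutive internal vertices on a subdivided edge are adjacent. -/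
def SubdivAdjBase {V : Type*} (G : SimpleGraph V) (k : ℕ) :
    SubdivVertex G k → SubdivVertex G k → Prop
  | Sum.inl u, Sum.inr x =>
      ∃ (d : G.Dart) (i : Fin k), (i : ℕ) = 0 ∧ d.toProd.1 = u ∧
        x = Quot.mk (SubdivRep G k) (d, i)
  | Sum.inr x, Sum.inr y =>
      ∃ (d : G.Dart) (i j : Fin k), (j : ℕ) = (i : ℕ) + 1 ∧
        x = Quot.mk (SubdivRep G k) (d, i) ∧ y = Quot.mk (SubdivRep G k) (d, j)
  | _, _ => False

/-- The `k`-subdivision of a simple graph `G`: every edge `uv` of `G` is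
replaced by a path from `u` to `v` through `k` new internal vertices. -/
def Subdivision {V : Type*} (G : SimpleGraph V) (k : ℕ) :
    SimpleGraph (SubdivVertex G k) where
  Adj x y := x ≠ y ∧ (SubdivAdjBase G k x y ∨ SubdivAdjBase G k y x)
  symm := ⟨fun x y h => ⟨Ne.symm h.1, h.2.symm⟩⟩
  loopless := ⟨fun x h => h.1 rfl⟩

/-- A homomorphism `f : G →g H` is locally bijective if for every vertex `u`
the restriction of `f` to the open neighbourhood of `u`, viewed as a map into
the open neighbourhood of `f u`, is a bijection. -/
def GraphHomLocallyBijective {V W : Type*} {G : SimpleGraph V} {H : SimpleGraph W}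
    (f : G →g H) : Prop :=
  ∀ u : V, Set.BijOn f (G.neighborSet u) (H.neighborSet (f u))

/-- A homomorphism `f : G →g H` is locally surjective if for every vertex `u`
the restriction of `f` to the open neighbourhood of `u`, viewed as a map into
the open neighbourhood of `f u`, is surjective. -/
def GraphHomLocallySurjective {V W : Type*} {G : SimpleGraph V} {H : SimpleGraph W}
    (f : G →g H) : Prop :=
  ∀ u : V, Set.SurjOn f (G.neighborSet u) (H.neighborSet (f u))

/-- A homomorphism `f : G →g H` is locally injective if for every vertex `u`
the restriction of `f` to the open neighbourhood of `u`, viewed as a map into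
the open neighbourhood of `f u`, is injective. -/
def GraphHomLocallyInjective {V W : Type*} {G : SimpleGraph V} {H : SimpleGraph W}
    (f : G →g H) : Prop :=
  ∀ u : V, Set.InjOn f (G.neighborSet u)

namespace SubdivAux

open SimpleGraph

variable {V W : Type*} {G : SimpleGraph V} {H : SimpleGraph W} {k : ℕ}

/-- The internal vertex of the subdivision corresponding to dart `d`, position `i`. -/
def icls (G : SimpleGraph V) (k : ℕ) (d : G.Dart) (i : ℕ) (h : i < k) : SubdivVertex G k :=
  Sum.inr (Quot.mk (SubdivRep G k) (d, ⟨i, h⟩))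

lemma icls_val (d : G.Dart) (i : Fin k) :
    icls G k d i.1 i.2 = Sum.inr (Quot.mk (SubdivRep G k) (d, i)) := by
  simp [icls]

lemma subdivRep_symm {a b : G.Dart × Fin k} (h : SubdivRep G k a b) : SubdivRep G k b a := by
  obtain ⟨h1, h2⟩ := h
  refine ⟨by rw [h1, SimpleGraph.Dart.symm_symm], ?_⟩
  have := a.2.isLt; have := b.2.isLt; omega

lemma eqvGen_subdivRep {a b : G.Dart × Fin k} (h : Relation.EqvGen (SubdivRep G k) a b) :
    a = b ∨ SubdivRep G k a b := by
  induction h with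
  | rel x y h => exact Or.inr h
  | refl x => exact Or.inl rfl
  | symm x y h ih =>
    rcases ih with rfl | h'
    · exact Or.inl rfl
    · exact Or.inr (subdivRep_symm h')
  | trans x y z h1 h2 ih1 ih2 =>
    rcases ih1 with rfl | h1'
    · exact ih2
    rcases ih2 with rfl | h2'
    · exact Or.inr h1'
    left
    obtain ⟨e1, n1⟩ := h1'; obtain ⟨e2, n2⟩ := h2'
    have hx := x.2.isLt; have hy := y.2.isLt; have hz := z.2.isLt
    have hd : x.1 = z.1 := by rw [e2, e1, SimpleGraph.Dart.symm_symm]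
    have hn : (x.2 : ℕ) = (z.2 : ℕ) := by omega
    exact Prod.ext hd (Fin.ext hn)

lemma icls_eq_icls_iff {d e : G.Dart} {i j : ℕ} {hi : i < k} {hj : j < k} :
    icls G k d i hi = icls G k e j hj ↔ (d = e ∧ i = j) ∨ (e = d.symm ∧ j = k - 1 - i) := by
  unfold icls
  rw [Sum.inr.injEq, Quot.eq]
  constructor
  · intro h
    rcases eqvGen_subdivRep h with h | h
    · left
      obtain ⟨h1, h2⟩ := Prod.mk.injEq .. ▸ h
      exact ⟨h1, by simpa using congrArg Fin.val h2⟩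
    · exact Or.inr ⟨h.1, h.2⟩
  · rintro (⟨rfl, rfl⟩ | ⟨rfl, rfl⟩)
    · exact Relation.EqvGen.refl _
    · exact Relation.EqvGen.rel _ _ ⟨rfl, rfl⟩

lemma base_ne {x y : SubdivVertex G k} (h : SubdivAdjBase G k x y) : x ≠ y := by
  cases x with
  | inl u =>
    cases y with
    | inl v => simp [SubdivAdjBase] at h
    | inr x => simp
  | inr x =>
    cases y with
    | inl v => simp [SubdivAdjBase] at h
    | inr y =>
      obtain ⟨d, i, j, hj, rfl, rfl⟩ := h
      simp only [ne_eq, Sum.inr.injEq]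
      intro hq
      have : icls G k d i.1 i.2 = icls G k d j.1 j.2 := by
        rw [icls_val, icls_val, hq]
      rcases icls_eq_icls_iff.mp this with ⟨-, hij⟩ | ⟨hd, -⟩
      · omega
      · exact SimpleGraph.Dart.fst_ne_snd d (congrArg (fun t => t.toProd.1) hd)

lemma adj_inl_iff {u : V} {z : SubdivVertex G k} :
    (Subdivision G k).Adj (Sum.inl u) z ↔
      ∃ (d : G.Dart) (h : 0 < k), d.toProd.1 = u ∧ z = icls G k d 0 h := by
  constructor
  · rintro ⟨hne, hb | hb⟩
    · cases z with
      | inl v => simp [SubdivAdjBase] at hb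
      | inr x =>
        obtain ⟨d, i, hi0, hdu, rfl⟩ := hb
        have hi : i = ⟨0, i.pos⟩ := Fin.ext hi0
        exact ⟨d, i.pos, hdu, by rw [hi]; rfl⟩
    · cases z with
      | inl v => simp [SubdivAdjBase] at hb
      | inr x => simp [SubdivAdjBase] at hb
  · rintro ⟨d, hk0, rfl, rfl⟩
    have hb : SubdivAdjBase G k (Sum.inl d.toProd.1) (icls G k d 0 hk0) :=
      ⟨d, ⟨0, hk0⟩, rfl, rfl, rfl⟩
    exact ⟨base_ne hb, Or.inl hb⟩

lemma icls_congr {d : G.Dart} {i j : ℕ} (hi : i < k) (hj : j < k) (h : i = j) :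
    icls G k d i hi = icls G k d j hj := by subst h; rfl

lemma icls_rev {d : G.Dart} {i : ℕ} (hi : i < k) :
    icls G k d i hi = icls G k d.symm (k - 1 - i) (by omega) :=
  icls_eq_icls_iff.mpr (Or.inr ⟨rfl, rfl⟩)

lemma adj_inr_inr_iff {x y : SubdivInternal G k} :
    (Subdivision G k).Adj (Sum.inr x) (Sum.inr y) ↔
      ∃ (d : G.Dart) (i : ℕ) (h : i + 1 < k),
        Sum.inr x = icls G k d i (Nat.lt_of_succ_lt h) ∧ Sum.inr y = icls G k d (i+1) h := by
  constructor
  · rintro ⟨hne, hb | hb⟩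
    · obtain ⟨d, i, j, hji, rfl, rfl⟩ := hb
      have hj := j.isLt
      refine ⟨d, i.1, by omega, ?_, ?_⟩
      · rw [← icls_val]
      · rw [← icls_val]
        exact icls_congr _ _ (by omega)
    · obtain ⟨d, i, j, hji, rfl, rfl⟩ := hb
      have hj := j.isLt
      have hi := i.isLt
      refine ⟨d.symm, k - 1 - j.1, by omega, ?_, ?_⟩
      · rw [← icls_val]
        exact icls_rev _
      · rw [← icls_val]
        exact (icls_rev _).trans (icls_congr _ _ (by omega))
  · rintro ⟨d, i, h, hx, hy⟩
    have hb : SubdivAdjBase G k (Sum.inr x) (Sum.inr y) := by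
      refine ⟨d, ⟨i, by omega⟩, ⟨i+1, h⟩, rfl, ?_, ?_⟩
      · exact Sum.inr.injEq .. ▸ hx
      · exact Sum.inr.injEq .. ▸ hy
    exact ⟨base_ne hb, Or.inl hb⟩

/-- The `j`-th vertex along the subdivided edge corresponding to dart `d`,
for `0 ≤ j ≤ k+1`; `j = 0` is the tail and `j = k+1` the head of the dart. -/
def pathVert (G : SimpleGraph V) (k : ℕ) (d : G.Dart) (j : ℕ) : SubdivVertex G k :=
  if h : 1 ≤ j ∧ j ≤ k then icls G k d (j-1) (by omega)
  else if j = 0 then Sum.inl d.toProd.1 else Sum.inl d.toProd.2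

lemma pathVert_zero (d : G.Dart) : pathVert G k d 0 = Sum.inl d.toProd.1 := by
  simp [pathVert]

lemma pathVert_last (d : G.Dart) : pathVert G k d (k+1) = Sum.inl d.toProd.2 := by
  have : ¬ (1 ≤ k+1 ∧ k+1 ≤ k) := by omega
  simp [pathVert, this]

lemma pathVert_mid (d : G.Dart) {j : ℕ} (h1 : 1 ≤ j) (h2 : j ≤ k) :
    pathVert G k d j = icls G k d (j-1) (by omega) := by
  simp [pathVert, h1, h2]

lemma pathVert_adj (hk : 0 < k) (d : G.Dart) {j : ℕ} (hj : j ≤ k) :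
    (Subdivision G k).Adj (pathVert G k d j) (pathVert G k d (j+1)) := by
  rcases Nat.eq_zero_or_pos j with rfl | hj1
  · rw [pathVert_zero, pathVert_mid d le_rfl hk]
    exact adj_inl_iff.mpr ⟨d, hk, rfl, rfl⟩
  rcases eq_or_lt_of_le hj with hjk | hjk
  · rw [show j + 1 = k + 1 by omega, pathVert_last, pathVert_mid d hj1 (by omega)]
    refine (Subdivision G k).adj_symm (adj_inl_iff.mpr ⟨d.symm, hk, rfl, ?_⟩)
    exact (icls_rev _).trans (icls_congr _ _ (by omega))
  · rw [pathVert_mid d hj1 (by omega), pathVert_mid d (by omega) (by omega)]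
    have hb : SubdivAdjBase G k (icls G k d (j-1) (by omega)) (icls G k d (j+1-1) (by omega)) := by
      refine ⟨d, ⟨j-1, by omega⟩, ⟨j+1-1, by omega⟩, ?_, rfl, rfl⟩
      show j+1-1 = (j-1) + 1
      omega
    exact ⟨base_ne hb, Or.inl hb⟩

lemma pathVert_ne (hk : 0 < k) (d : G.Dart) {j : ℕ} (hj : j + 2 ≤ k + 1) :
    pathVert G k d j ≠ pathVert G k d (j+2) := by
  rcases Nat.eq_zero_or_pos j with rfl | hj1
  · rw [pathVert_zero]
    rcases eq_or_lt_of_le hj with h2 | h2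
    · rw [show 0+2 = k+1 by omega, pathVert_last]
      simp only [ne_eq, Sum.inl.injEq]
      exact d.fst_ne_snd
    · rw [pathVert_mid d (by omega) (by omega)]
      simp [icls]
  rcases eq_or_lt_of_le hj with h2 | h2
  · rw [show j+2 = k+1 by omega, pathVert_last, pathVert_mid d hj1 (by omega)]
    simp [icls]
  · rw [pathVert_mid d hj1 (by omega), pathVert_mid d (by omega) (by omega)]
    intro h
    rcases icls_eq_icls_iff.mp h with ⟨-, hij⟩ | ⟨hd, -⟩
    · omega
    · exact SimpleGraph.Dart.fst_ne_snd d (congrArg (fun t => t.toProd.1) hd)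

lemma neighborSet_icls (d : G.Dart) {i : ℕ} (h : i < k) :
    (Subdivision G k).neighborSet (icls G k d i h) =
      {pathVert G k d i, pathVert G k d (i+2)} := by
  have hk : 0 < k := by omega
  have hprev : (Subdivision G k).Adj (icls G k d i h) (pathVert G k d i) := by
    have h2 := pathVert_adj hk d (j := i) (by omega)
    rw [pathVert_mid d (show 1 ≤ i+1 by omega) (show i+1 ≤ k by omega)] at h2
    rw [icls_congr h (show i+1-1 < k by omega) (by omega)]
    exact h2.symm
  have hnext : (Subdivision G k).Adj (icls G k d i h) (pathVert G k d (i+2)) := by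
    have h2 := pathVert_adj hk d (j := i+1) (by omega)
    rw [pathVert_mid d (show 1 ≤ i+1 by omega) (show i+1 ≤ k by omega)] at h2
    rw [icls_congr h (show i+1-1 < k by omega) (by omega)]
    exact h2
  ext z
  simp only [SimpleGraph.mem_neighborSet, Set.mem_insert_iff, Set.mem_singleton_iff]
  constructor
  · intro hz
    cases z with
    | inl u =>
      obtain ⟨e, he, heu, heq⟩ := adj_inl_iff.mp ((Subdivision G k).adj_symm hz)
      rcases icls_eq_icls_iff.mp heq with ⟨hde, hi0⟩ | ⟨hde, hi0⟩
      · left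
        rw [hi0, pathVert_zero, ← heu, hde]
      · right
        rw [show i + 2 = k+1 by omega, pathVert_last, ← heu, hde]
        rfl
    | inr y =>
      obtain ⟨e, l, hl, hx, hy⟩ := adj_inr_inr_iff.mp (by rw [icls] at hz; exact hz)
      rw [← icls] at hx
      rcases icls_eq_icls_iff.mp hx with ⟨hde, hil⟩ | ⟨hde, hil⟩
      · right
        rw [hy, pathVert_mid d (by omega) (by omega)]
        subst hde
        exact (icls_congr _ _ (by omega)).symm
      · left
        have hi1 : 1 ≤ i := by omega
        rw [hy, pathVert_mid d hi1 (by omega)]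
        subst hde
        exact ((icls_rev (d := d) (i := i-1) (by omega)).trans (icls_congr _ _ (by omega))).symm
  · rintro (rfl | rfl)
    · exact hprev
    · exact hnext
open scoped Classical in
lemma ncard_neighborSet_icls (d : G.Dart) {i : ℕ} (h : i < k) :
    ((Subdivision G k).neighborSet (icls G k d i h)).ncard = 2 := by
  rw [neighborSet_icls]
  exact Set.ncard_pair (pathVert_ne (by omega) d (by omega))

open scoped Classical in
lemma neighborSet_inl_eq (hk : 0 < k) (u : V) :
    (Subdivision G k).neighborSet (Sum.inl u) =
      (fun v => if h : G.Adj u v then icls G k ⟨(u, v), h⟩ 0 hk else Sum.inl u) ''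
        (G.neighborSet u) := by
  ext z
  simp only [SimpleGraph.mem_neighborSet, Set.mem_image]
  constructor
  · intro hz
    obtain ⟨d, hd, hdu, rfl⟩ := adj_inl_iff.mp hz
    refine ⟨d.toProd.2, by rw [← hdu]; exact d.adj, ?_⟩
    have ha : G.Adj u d.toProd.2 := by rw [← hdu]; exact d.adj
    rw [dif_pos ha]
    have : (⟨(u, d.toProd.2), ha⟩ : G.Dart) = d := by
      ext <;> simp [← hdu]
    rw [this]
  · rintro ⟨v, hv, rfl⟩
    rw [dif_pos hv]
    exact adj_inl_iff.mpr ⟨⟨(u, v), hv⟩, hk, rfl, rfl⟩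

open scoped Classical in
lemma ncard_neighborSet_inl (hk : 0 < k) (u : V) :
    ((Subdivision G k).neighborSet (Sum.inl u : SubdivVertex G k)).ncard =
      (G.neighborSet u).ncard := by
  rw [neighborSet_inl_eq hk u]
  apply Set.ncard_image_of_injOn
  intro v hv v' hv' hvv'
  simp only [SimpleGraph.mem_neighborSet] at hv hv'
  simp only [dif_pos hv, dif_pos hv'] at hvv'
  rcases icls_eq_icls_iff.mp hvv' with ⟨hd, -⟩ | ⟨hd, -⟩
  · exact congrArg (fun t => t.toProd.2) hd
  · have h2 : u = v := congrArg (fun t => t.toProd.1) hd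
    exact absurd h2 hv.ne

lemma locBij_ncard {f : G →g H} (hf : GraphHomLocallyBijective f) (u : V) :
    (H.neighborSet (f u)).ncard = (G.neighborSet u).ncard := by
  rw [← (hf u).image_eq]
  exact Set.ncard_image_of_injOn (hf u).injOn

lemma degree_eq_ncard [Fintype V] [DecidableRel G.Adj] (u : V) :
    G.degree u = (G.neighborSet u).ncard := by
  rw [← SimpleGraph.card_neighborFinset_eq_degree, ← Set.ncard_coe_finset]
  congr 1
  ext w
  simp

lemma K4_ncard (A : Fin 4) : ((completeGraph (Fin 4)).neighborSet A).ncard = 3 := by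
  have h1 : (completeGraph (Fin 4)).neighborSet A = {A}ᶜ := by
    ext w
    simp [completeGraph, ne_comm, eq_comm]
  have h2 := Set.ncard_add_ncard_compl ({A} : Set (Fin 4))
  rw [h1]
  simp only [Set.ncard_singleton, Nat.card_eq_fintype_card, Fintype.card_fin] at h2
  omega

/-- The image of a dart under a graph homomorphism. -/
def fdart (f : G →g H) (d : G.Dart) : H.Dart :=
  ⟨(f d.toProd.1, f d.toProd.2), f.map_adj d.adj⟩

lemma fdart_symm (f : G →g H) (d : G.Dart) : fdart f d.symm = (fdart f d).symm := rfl

/-- The induced map on vertices of subdivisions. -/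
def Fmap (f : G →g H) : SubdivVertex G k → SubdivVertex H k :=
  Sum.map f (Quot.map (fun p => (fdart f p.1, p.2))
    (fun a b h => ⟨by show fdart f b.1 = (fdart f a.1).symm; rw [h.1, fdart_symm], h.2⟩))

lemma Fmap_inl (f : G →g H) (u : V) : Fmap (k := k) f (Sum.inl u) = Sum.inl (f u) := rfl

lemma Fmap_icls (f : G →g H) (d : G.Dart) {i : ℕ} (h : i < k) :
    Fmap f (icls G k d i h) = icls H k (fdart f d) i h := rfl

lemma Fmap_pathVert (f : G →g H) (d : G.Dart) (j : ℕ) :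
    Fmap f (pathVert G k d j) = pathVert H k (fdart f d) j := by
  unfold pathVert
  split_ifs <;> rfl

lemma Fmap_base (f : G →g H) {x y : SubdivVertex G k} (h : SubdivAdjBase G k x y) :
    SubdivAdjBase H k (Fmap f x) (Fmap f y) := by
  cases x with
  | inl u =>
    cases y with
    | inl v => simp [SubdivAdjBase] at h
    | inr x =>
      obtain ⟨d, i, hi, hdu, rfl⟩ := h
      exact ⟨fdart f d, i, hi, by rw [← hdu]; rfl, rfl⟩
  | inr x =>
    cases y with
    | inl v => simp [SubdivAdjBase] at h
    | inr y =>
      obtain ⟨d, i, j, hji, rfl, rfl⟩ := h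
      exact ⟨fdart f d, i, j, hji, rfl, rfl⟩

/-- The induced homomorphism between subdivisions. -/
def FmapHom (f : G →g H) : Subdivision G k →g Subdivision H k where
  toFun := Fmap f
  map_rel' := by
    rintro x y ⟨hne, hb | hb⟩
    · exact ⟨base_ne (Fmap_base f hb), Or.inl (Fmap_base f hb)⟩
    · exact ⟨(base_ne (Fmap_base f hb)).symm, Or.inr (Fmap_base f hb)⟩
lemma step_lemma {F : Subdivision G k →g Subdivision H k}
    (hinj : GraphHomLocallyInjective F)
    {a b c : SubdivVertex G k}
    (hab : (Subdivision G k).Adj a b) (hbc : (Subdivision G k).Adj b c) (hac : a ≠ c)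
    {e : H.Dart} {j : ℕ} (h1 : 1 ≤ j) (h2 : j ≤ k)
    (hb : F b = pathVert H k e j) (ha : F a = pathVert H k e (j-1)) :
    F c = pathVert H k e (j+1) := by
  have hc : F c ∈ (Subdivision H k).neighborSet (F b) := F.map_adj hbc
  rw [hb, pathVert_mid e h1 h2, neighborSet_icls e (by omega)] at hc
  simp only [Set.mem_insert_iff, Set.mem_singleton_iff] at hc
  rcases hc with hc | hc
  · exfalso
    apply hac
    refine hinj b (SimpleGraph.mem_neighborSet .. |>.mpr hab.symm)
      (SimpleGraph.mem_neighborSet .. |>.mpr hbc) ?_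
    rw [ha, hc]
  · rw [show j - 1 + 2 = j + 1 by omega] at hc
    exact hc

lemma lift_dart {F : Subdivision G k →g Subdivision H k}
    (hinj : GraphHomLocallyInjective F) (hk : 0 < k) (d : G.Dart) {A : W}
    (h0 : F (Sum.inl d.toProd.1) = Sum.inl A) :
    ∃ e : H.Dart, e.toProd.1 = A ∧ F (Sum.inl d.toProd.2) = Sum.inl e.toProd.2 ∧
      F (icls G k d 0 hk) = icls H k e 0 hk := by
  have hadj0 : (Subdivision G k).Adj (Sum.inl d.toProd.1) (icls G k d 0 hk) :=
    adj_inl_iff.mpr ⟨d, hk, rfl, rfl⟩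
  have h1 : (Subdivision H k).Adj (Sum.inl A) (F (icls G k d 0 hk)) := by
    rw [← h0]; exact F.map_adj hadj0
  obtain ⟨e, he, heA, heq⟩ := adj_inl_iff.mp h1
  have key : ∀ j, j ≤ k → F (pathVert G k d j) = pathVert H k e j ∧
      F (pathVert G k d (j+1)) = pathVert H k e (j+1) := by
    intro j
    induction j with
    | zero =>
      intro _
      constructor
      · rw [pathVert_zero, pathVert_zero, h0, heA]
      · rw [pathVert_mid d le_rfl hk, pathVert_mid e le_rfl hk]
        exact heq
    | succ j ih =>
      intro hj1
      obtain ⟨p, q⟩ := ih (by omega)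
      refine ⟨q, ?_⟩
      exact step_lemma hinj (pathVert_adj (by omega) d (by omega))
        (pathVert_adj (by omega) d hj1) (pathVert_ne (by omega) d (by omega))
        (j := j+1) (by omega) hj1 q p
  refine ⟨e, heA, ?_, heq⟩
  have := (key k le_rfl).2
  rw [pathVert_last, pathVert_last] at this
  exact this
lemma forward (hk : 0 < k) {f : G →g H} (hf : GraphHomLocallyBijective f) :
    GraphHomLocallyBijective (FmapHom (k := k) f) := by
  intro x
  cases x with
  | inl u =>
    refine ⟨fun z hz => (FmapHom f).map_adj hz, ?_, ?_⟩
    · -- InjOn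
      intro z hz z' hz' hzz'
      simp only [SimpleGraph.mem_neighborSet] at hz hz'
      obtain ⟨d, hd, hdu, rfl⟩ := adj_inl_iff.mp hz
      obtain ⟨d', hd', hdu', rfl⟩ := adj_inl_iff.mp hz'
      have hzz : icls H k (fdart f d) 0 hd = icls H k (fdart f d') 0 hd' := hzz'
      rcases icls_eq_icls_iff.mp hzz with ⟨hde, -⟩ | ⟨hde, -⟩
      · have h2 : f d.toProd.2 = f d'.toProd.2 := congrArg (fun t => t.toProd.2) hde
        have hm : d.toProd.2 ∈ G.neighborSet u := by
          rw [SimpleGraph.mem_neighborSet, ← hdu]; exact d.adj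
        have hm' : d'.toProd.2 ∈ G.neighborSet u := by
          rw [SimpleGraph.mem_neighborSet, ← hdu']; exact d'.adj
        have h3 : d.toProd.2 = d'.toProd.2 := (hf u).injOn hm hm' h2
        have h4 : d = d' := by
          ext
          · rw [hdu, hdu']
          · exact h3
        rw [h4]
      · exfalso
        have h2 : f d'.toProd.1 = f d.toProd.2 := congrArg (fun t => t.toProd.1) hde
        have hadj : G.Adj u d.toProd.2 := hdu ▸ d.adj
        exact (f.map_adj hadj).ne (by rw [← hdu', h2])
    · -- SurjOn
      intro w hw
      simp only [SimpleGraph.mem_neighborSet] at hw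
      have hw' : (Subdivision H k).Adj (Sum.inl (f u)) w := hw
      obtain ⟨e, he, heA, rfl⟩ := adj_inl_iff.mp hw'
      have hmem : e.toProd.2 ∈ H.neighborSet (f u) := by
        rw [SimpleGraph.mem_neighborSet, ← heA]; exact e.adj
      obtain ⟨v, hv, hfv⟩ := (hf u).surjOn hmem
      rw [SimpleGraph.mem_neighborSet] at hv
      refine ⟨icls G k ⟨(u, v), hv⟩ 0 he, ?_, ?_⟩
      · exact adj_inl_iff.mpr ⟨⟨(u, v), hv⟩, he, rfl, rfl⟩
      · show icls H k (fdart f ⟨(u, v), hv⟩) 0 he = icls H k e 0 he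
        have : fdart f ⟨(u, v), hv⟩ = e := by
          ext
          · exact heA.symm
          · exact hfv
        rw [this]
  | inr q =>
    obtain ⟨⟨d, i⟩, rfl⟩ := Quot.exists_rep q
    have hexp : (Sum.inr (Quot.mk (SubdivRep G k) (d, i)) : SubdivVertex G k) =
        icls G k d i.1 i.2 := (icls_val d i).symm
    rw [hexp]
    have hFx : (FmapHom f) (icls G k d i.1 i.2) = icls H k (fdart f d) i.1 i.2 := rfl
    rw [show ((Subdivision H k).neighborSet ((FmapHom f) (icls G k d i.1 i.2))) =
        {pathVert H k (fdart f d) i.1, pathVert H k (fdart f d) (i.1+2)} by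
      rw [hFx, neighborSet_icls]]
    rw [neighborSet_icls d i.2]
    have hilt := i.2
    refine ⟨?_, ?_, ?_⟩
    · rintro z (rfl | rfl)
      · left; exact Fmap_pathVert f d i.1
      · right
        rw [Set.mem_singleton_iff]
        exact Fmap_pathVert f d (i.1+2)
    · rintro z (rfl | rfl) z' (rfl | rfl) hzz <;>
        [skip; skip; skip; skip]
      · rfl
      · exfalso
        rw [show ((FmapHom f) (pathVert G k d i.1) : SubdivVertex H k) =
            pathVert H k (fdart f d) i.1 from Fmap_pathVert f d i.1,
          show ((FmapHom f) (pathVert G k d (i.1+2)) : SubdivVertex H k) =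
            pathVert H k (fdart f d) (i.1+2) from Fmap_pathVert f d (i.1+2)] at hzz
        exact pathVert_ne hk (fdart f d) (by omega) hzz
      · exfalso
        rw [show ((FmapHom f) (pathVert G k d i.1) : SubdivVertex H k) =
            pathVert H k (fdart f d) i.1 from Fmap_pathVert f d i.1,
          show ((FmapHom f) (pathVert G k d (i.1+2)) : SubdivVertex H k) =
            pathVert H k (fdart f d) (i.1+2) from Fmap_pathVert f d (i.1+2)] at hzz
        exact pathVert_ne hk (fdart f d) (by omega) hzz.symm
      · rfl
    · rintro w (rfl | rfl)
      · exact ⟨pathVert G k d i.1, Or.inl rfl, Fmap_pathVert f d i.1⟩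
      · exact ⟨pathVert G k d (i.1+2), Or.inr rfl, Fmap_pathVert f d (i.1+2)⟩

end SubdivAux

open SubdivAux

/-- Let `r ≥ 1` and let `G` be a connected subcubic graph with at least one
vertex of degree 3.  Then there is a locally bijective homomorphism from `G`
to `K₄` if and only if there is one from `G^r` to `K₄^r`. -/
theorem statement3 {V : Type*} [Fintype V] (G : SimpleGraph V)
    [DecidableRel G.Adj] (r : ℕ) (hr : 1 ≤ r) (hconn : G.Connected)
    (hcubic : ∀ v : V, G.degree v ≤ 3) (hdeg3 : ∃ v : V, G.degree v = 3) :
    (∃ f : G →g SimpleGraph.completeGraph (Fin 4), GraphHomLocallyBijective f) ↔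
      (∃ f : Subdivision G r →g Subdivision (SimpleGraph.completeGraph (Fin 4)) r,
        GraphHomLocallyBijective f) := by
  constructor
  · rintro ⟨f, hf⟩
    exact ⟨FmapHom f, forward hr hf⟩
  · rintro ⟨F, hF⟩
    have hFinj : GraphHomLocallyInjective F := fun u => (hF u).injOn
    have hbranch : ∀ u : V, (G.neighborSet u).ncard = 3 →
        ∃ A, F (Sum.inl u) = Sum.inl A := by
      intro u hu
      have hcard := locBij_ncard hF (Sum.inl u)
      rw [ncard_neighborSet_inl hr, hu] at hcard
      rcases hFu : F (Sum.inl u) with A | q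
      · exact ⟨A, rfl⟩
      · exfalso
        obtain ⟨⟨d, i⟩, rfl⟩ := Quot.exists_rep q
        rw [hFu, ← icls_val d i, ncard_neighborSet_icls] at hcard
        omega
    obtain ⟨v₀, hv₀⟩ := hdeg3
    have hv₀' : (G.neighborSet v₀).ncard = 3 := by
      rw [← degree_eq_ncard]; exact hv₀
    have hAll : ∀ u : V, ∃ A, F (Sum.inl u) = Sum.inl A := by
      have key : ∀ {a b : V} (_ : G.Walk a b),
          (∃ A, F (Sum.inl a) = Sum.inl A) → ∃ B, F (Sum.inl b) = Sum.inl B := by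
        intro a b w
        induction w with
        | nil => exact id
        | @cons a x b hax p ih =>
          rintro ⟨A, hA⟩
          apply ih
          obtain ⟨e, -, he2, -⟩ := lift_dart hFinj hr (⟨(a, x), hax⟩ : G.Dart) hA
          exact ⟨e.toProd.2, he2⟩
      intro u
      obtain ⟨w⟩ := hconn.preconnected v₀ u
      exact key w (hbranch v₀ hv₀')
    choose f hf using hAll
    have hKcard : ∀ A : Fin 4, ((SimpleGraph.completeGraph (Fin 4)).neighborSet A).ncard = 3 := K4_ncard
    have hdeg : ∀ u : V, (G.neighborSet u).ncard = 3 := by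
      intro u
      have h1 := locBij_ncard hF (Sum.inl u)
      rw [hf u, ncard_neighborSet_inl hr, ncard_neighborSet_inl hr, hKcard] at h1
      exact h1.symm
    have hmap : ∀ {u v : V}, G.Adj u v → (SimpleGraph.completeGraph (Fin 4)).Adj (f u) (f v) := by
      intro u v huv
      obtain ⟨e, he1, he2, -⟩ := lift_dart hFinj hr (⟨(u, v), huv⟩ : G.Dart) (hf u)
      have hfv : f v = e.toProd.2 := Sum.inl_injective ((hf v).symm.trans he2)
      rw [hfv, ← he1]
      exact e.adj
    refine ⟨⟨f, fun h => hmap h⟩, ?_⟩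
    intro u
    have hmapsTo : Set.MapsTo f (G.neighborSet u)
        ((SimpleGraph.completeGraph (Fin 4)).neighborSet (f u)) := fun v hv => hmap hv
    have hinjOn : Set.InjOn f (G.neighborSet u) := by
      intro v hv v' hv' hvv'
      rw [SimpleGraph.mem_neighborSet] at hv hv'
      obtain ⟨e, he1, he2, he3⟩ := lift_dart hFinj hr (⟨(u, v), hv⟩ : G.Dart) (hf u)
      obtain ⟨e', he1', he2', he3'⟩ := lift_dart hFinj hr (⟨(u, v'), hv'⟩ : G.Dart) (hf u)
      have hee : e = e' := by
        ext
        · rw [he1, he1']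
        · have hv2 : f v = e.toProd.2 := Sum.inl_injective ((hf v).symm.trans he2)
          have hv2' : f v' = e'.toProd.2 := Sum.inl_injective ((hf v').symm.trans he2')
          rw [← hv2, ← hv2', hvv']
      have hmem1 : (icls G r (⟨(u, v), hv⟩ : G.Dart) 0 hr) ∈
          (Subdivision G r).neighborSet (Sum.inl u) :=
        adj_inl_iff.mpr ⟨_, hr, rfl, rfl⟩
      have hmem2 : (icls G r (⟨(u, v'), hv'⟩ : G.Dart) 0 hr) ∈
          (Subdivision G r).neighborSet (Sum.inl u) :=
        adj_inl_iff.mpr ⟨_, hr, rfl, rfl⟩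
      have heq := hFinj (Sum.inl u) hmem1 hmem2 (by rw [he3, he3', hee])
      rcases icls_eq_icls_iff.mp heq with ⟨hd, -⟩ | ⟨hd, -⟩
      · exact congrArg (fun t => t.toProd.2) hd
      · exfalso
        have h2 : u = v := congrArg (fun t => t.toProd.1) hd
        exact hv.ne h2
    have hsurjOn : Set.SurjOn f (G.neighborSet u)
        ((SimpleGraph.completeGraph (Fin 4)).neighborSet (f u)) := by
      have himg : f '' (G.neighborSet u) = (SimpleGraph.completeGraph (Fin 4)).neighborSet (f u) := by
        apply Set.eq_of_subset_of_ncard_le (Set.mapsTo_iff_image_subset.mp hmapsTo)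
        rw [Set.ncard_image_of_injOn hinjOn, hdeg u, hKcard]
      have h0 : Set.SurjOn f (G.neighborSet u) (f '' (G.neighborSet u)) :=
        Set.Subset.rfl
      rwa [himg] at h0
    exact ⟨hmapsTo, hinjOn, hsurjOn⟩
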